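/- For all nonnegative integers n and r, Li⁻_{(0,0,…,0,r)} with n leading zeros equals (Li⁻_0)^n · Li⁻_r, i.e. ∑_{n₁>⋯>n_{n+1}>0} n_{n+1}^r z^{n₁} = (z/(1-z))^n · ∑_{m>0} m^r z^m as formal power series. -/

import Mathlib

open PowerSeries Finset

/-- Coefficient at `z^n` of the non-positive MPL attached to an index list:
for `s = (s₁,…,s_r)` this is `∑_{n = n₁ > n₂ > ⋯ > n_r > 0} n₁^{s₁}⋯n_r^{s_r}`. -/
def liCoeff : List ℕ → ℕ → ℚ
  | [], n => if n = 0 then 1 else 0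
  | s :: t, n => if n = 0 then 0 else (n : ℚ) ^ s * ∑ m ∈ Finset.range n, liCoeff t m

/-- The non-positive multiple polylogarithm
`Li⁻_{(s₁,…,s_r)}(z) = ∑_{n₁>⋯>n_r>0} n₁^{s₁}⋯n_r^{s_r} z^{n₁} ∈ ℚ⟦z⟧`. -/
noncomputable def Li (s : List ℕ) : PowerSeries ℚ := PowerSeries.mk (liCoeff s)

lemma liCoeff_zero_single (i : ℕ) : liCoeff [0] i = if i = 0 then 0 else 1 := by
  rcases Nat.eq_zero_or_pos i with h | h
  · simp [h, liCoeff]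
  · have hi : i ≠ 0 := h.ne'
    simp only [liCoeff, if_neg hi, pow_zero, one_mul]
    rw [Finset.sum_ite_eq' (Finset.range i) 0 (fun _ => (1 : ℚ))]
    simp [Finset.mem_range, h]

lemma Li_cons_zero (s : List ℕ) : Li (0 :: s) = Li [0] * Li s := by
  ext n
  rw [mul_comm, Li, coeff_mk, coeff_mul,
    Finset.Nat.sum_antidiagonal_eq_sum_range_succ
      (fun i j => (coeff i) (Li s) * (coeff j) (Li [0]))]
  simp only [Li, coeff_mk, liCoeff_zero_single]
  rw [Finset.sum_range_succ]
  simp only [Nat.sub_self, if_pos rfl, mul_zero, add_zero]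
  have hterm : ∀ k ∈ Finset.range n,
      liCoeff s k * (if n - k = 0 then (0:ℚ) else 1) = liCoeff s k := by
    intro k hk
    rw [if_neg (Nat.sub_ne_zero_of_lt (Finset.mem_range.mp hk)), mul_one]
  rw [Finset.sum_congr rfl hterm]
  rcases Nat.eq_zero_or_pos n with h | h
  · simp [h, liCoeff]
  · simp [liCoeff, h.ne']

theorem Li_zeros_cons (n r : ℕ) :
    Li (List.replicate n 0 ++ [r]) = (Li [0]) ^ n * Li [r] := by
  induction n with
  | zero => simp
  | succ k ih =>
    rw [List.replicate_succ, List.cons_append, Li_cons_zero, ih, pow_succ]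
    ring
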